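/- Every locally consistent specification is consistent: if S is a specification in which every state allows independent progress, then there exists an implementation P over the same alphabet as S with P ≤ S. -/

import Mathlib

open scoped NNReal

/-- A (raw) Timed I/O Transition System over an ambient action type `Act`
and state type `Q`.  The actual sets of input and output actions are the
fields `inputs` and `outputs`; `actTrans` is the action-labelled part of
the transition relation and `delayTrans` the delay-labelled part. -/
structure TIOTS (Act : Type) (Q : Type) where
  init : Q
  inputs : Set Act
  outputs : Set Act
  actTrans : Q → Act → Q → Prop
  delayTrans : Q → ℝ≥0 → Q → Prop

namespace TIOTS

variable {Act Q Q1 Q2 Q3 : Type}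

/-- The alphabet (action set) of a TIOTS. -/
def acts (S : TIOTS Act Q) : Set Act := S.inputs ∪ S.outputs

/-- The axioms of Timed I/O Transition Systems: inputs and outputs are
disjoint, action transitions are labelled by actions of the alphabet,
determinism (for actions and delays), time reflexivity and time additivity. -/
def IsTIOTS (S : TIOTS Act Q) : Prop :=
  Disjoint S.inputs S.outputs ∧
  (∀ q a q', S.actTrans q a q' → a ∈ S.acts) ∧
  (∀ q a q' q'', S.actTrans q a q' → S.actTrans q a q'' → q' = q'') ∧
  (∀ q (d : ℝ≥0) q' q'', S.delayTrans q d q' → S.delayTrans q d q'' → q' = q'') ∧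
  (∀ q, S.delayTrans q 0 q) ∧
  (∀ q q'' (d₁ d₂ : ℝ≥0),
    S.delayTrans q (d₁ + d₂) q'' ↔ ∃ q', S.delayTrans q d₁ q' ∧ S.delayTrans q' d₂ q'')

/-- Input-enabledness: every state accepts every input of the alphabet. -/
def InputEnabled (S : TIOTS Act Q) : Prop :=
  ∀ q, ∀ a ∈ S.inputs, ∃ q', S.actTrans q a q'

/-- A specification is an input-enabled TIOTS. -/
def IsSpecification (S : TIOTS Act Q) : Prop :=
  S.IsTIOTS ∧ S.InputEnabled

/-- A state allows independent progress if it can delay forever, or can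
delay until an output is enabled. -/
def IndependentProgress (S : TIOTS Act Q) (q : Q) : Prop :=
  (∀ d : ℝ≥0, ∃ q', S.delayTrans q d q') ∨
  (∃ (d : ℝ≥0) (q' : Q), ∃ o ∈ S.outputs,
    S.delayTrans q d q' ∧ ∃ q'', S.actTrans q' o q'')

/-- Output urgency of a state: if an output is enabled, no positive delay is. -/
def OutputUrgent (S : TIOTS Act Q) (q : Q) : Prop :=
  ∀ o ∈ S.outputs, ∀ (q' : Q) (d : ℝ≥0) (q'' : Q),
    S.actTrans q o q' → S.delayTrans q d q'' → d = 0

/-- An implementation is a specification all of whose states are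
output urgent and allow independent progress. -/
def IsImplementation (P : TIOTS Act Q) : Prop :=
  P.IsSpecification ∧ ∀ q, P.OutputUrgent q ∧ P.IndependentProgress q

/-- A locally consistent specification: every state allows independent progress. -/
def LocallyConsistent (S : TIOTS Act Q) : Prop :=
  S.IsSpecification ∧ ∀ q, S.IndependentProgress q

/-- Refinement `S ≤ T` (including the side conditions on the alphabets). -/
def Refines (S : TIOTS Act Q1) (T : TIOTS Act Q2) : Prop :=
  Disjoint S.inputs T.outputs ∧ Disjoint S.outputs T.inputs ∧
  S.inputs ⊆ T.inputs ∧ T.outputs ⊆ S.outputs ∧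
  ∃ R : Q1 → Q2 → Prop,
    R S.init T.init ∧
    ∀ s t, R s t →
      (∀ a ∈ T.inputs ∩ S.inputs, ∀ t', T.actTrans t a t' →
        ∃ s', S.actTrans s a s' ∧ R s' t') ∧
      (∀ a ∈ T.inputs \ S.inputs, ∀ t', T.actTrans t a t' → R s t') ∧
      (∀ a ∈ S.outputs ∩ T.outputs, ∀ s', S.actTrans s a s' →
        ∃ t', T.actTrans t a t' ∧ R s' t') ∧
      (∀ a ∈ S.outputs \ T.outputs, ∀ s', S.actTrans s a s' → R s' t) ∧
      (∀ (d : ℝ≥0) (s' : Q1), S.delayTrans s d s' →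
        ∃ t', T.delayTrans t d t' ∧ R s' t')

/-- `Mod S P` : `P` belongs to `mod(S)`, i.e. `P` is an implementation over
the alphabet of `S` satisfying (refining) `S`. -/
def Mod (S : TIOTS Act Q1) (P : TIOTS Act Q2) : Prop :=
  P.IsImplementation ∧ P.inputs = S.inputs ∧ P.outputs = S.outputs ∧ P.Refines S

/-- The TIOTS obtained from `S` by replacing the initial state by `q`. -/
def withInit (S : TIOTS Act Q) (q : Q) : TIOTS Act Q := { S with init := q }

/-- Reachability by finite sequences of action and delay transitions. -/
inductive Reach (S : TIOTS Act Q) : Q → Q → Prop where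
  | refl (q : Q) : Reach S q q
  | act {q q' q'' : Q} (a : Act) : S.actTrans q a q' → Reach S q' q'' → Reach S q q''
  | delay {q q' q'' : Q} (d : ℝ≥0) : S.delayTrans q d q' → Reach S q' q'' → Reach S q q''

/-- The set of error states relative to a set `X`. -/
def errSet (S : TIOTS Act Q) (X : Set Q) : Set Q :=
  { q | (∃ d : ℝ≥0, ¬ ∃ q', S.delayTrans q d q') ∧
        ∀ (d : ℝ≥0), ∀ o ∈ S.outputs, ∀ q', S.delayTrans q d q' →
          ((¬ ∃ q'', S.actTrans q' o q'') ∨ ∀ q'', S.actTrans q' o q'' → q'' ∈ X) }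

/-- The operator `Θ` whose greatest fixpoint is the set of consistent states. -/
def Theta (S : TIOTS Act Q) (X : Set Q) : Set Q :=
  (Set.univ \ S.errSet (Set.univ \ X)) ∩
  { q | ∀ d : ℝ≥0,
      (∀ q', S.delayTrans q d q' →
        (q' ∈ X ∧ ∀ i ∈ S.inputs, ∃ q'', q'' ∈ X ∧ S.actTrans q' i q'')) ∨
      (∃ d' : ℝ≥0, d' ≤ d ∧ ∃ q' q'', q' ∈ X ∧ q'' ∈ X ∧ ∃ o ∈ S.outputs,
        S.delayTrans q d' q' ∧ S.actTrans q' o q'' ∧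
        ∀ i ∈ S.inputs, ∃ q''', q''' ∈ X ∧ S.actTrans q' i q''') }

/-- The set of consistent states: the greatest fixpoint of the monotone
operator `Θ`, given by Knaster–Tarski as the union of all postfixed points. -/
def consSet (S : TIOTS Act Q) : Set Q := ⋃₀ { X | X ⊆ S.Theta X }

/-- Adversarial pruning `S^Δ`: restrict the states to the consistent ones and
restrict the transition relation accordingly. -/
def prune (S : TIOTS Act Q) (h : S.init ∈ S.consSet) :
    TIOTS Act {q : Q // q ∈ S.consSet} where
  init := ⟨S.init, h⟩
  inputs := S.inputs
  outputs := S.outputs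
  actTrans := fun q a q' => S.actTrans q.1 a q'.1
  delayTrans := fun q d q' => S.delayTrans q.1 d q'.1

/-- Conjunction of TIOTSs. -/
def conj (S : TIOTS Act Q1) (T : TIOTS Act Q2) : TIOTS Act (Q1 × Q2) where
  init := (S.init, T.init)
  inputs := S.inputs ∪ T.inputs
  outputs := S.outputs ∪ T.outputs
  actTrans := fun q a q' =>
    (a ∈ S.acts ∩ T.acts ∧ S.actTrans q.1 a q'.1 ∧ T.actTrans q.2 a q'.2) ∨
    (a ∈ S.acts \ T.acts ∧ S.actTrans q.1 a q'.1 ∧ q'.2 = q.2) ∨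
    (a ∈ T.acts \ S.acts ∧ T.actTrans q.2 a q'.2 ∧ q'.1 = q.1)
  delayTrans := fun q d q' => S.delayTrans q.1 d q'.1 ∧ T.delayTrans q.2 d q'.2

/-- Parallel composition of TIOTSs. -/
def par (S : TIOTS Act Q1) (T : TIOTS Act Q2) : TIOTS Act (Q1 × Q2) where
  init := (S.init, T.init)
  inputs := (S.inputs \ T.outputs) ∪ (T.inputs \ S.outputs)
  outputs := S.outputs ∪ T.outputs
  actTrans := fun q a q' =>
    (a ∈ S.acts ∩ T.acts ∧ S.actTrans q.1 a q'.1 ∧ T.actTrans q.2 a q'.2) ∨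
    (a ∈ S.acts \ T.acts ∧ S.actTrans q.1 a q'.1 ∧ q'.2 = q.2) ∨
    (a ∈ T.acts \ S.acts ∧ T.actTrans q.2 a q'.2 ∧ q'.1 = q.1)
  delayTrans := fun q d q' => S.delayTrans q.1 d q'.1 ∧ T.delayTrans q.2 d q'.2

/-- States of the quotient: pairs of states, a universal state and an error state. -/
inductive QSt (Q1 Q2 : Type) where
  | st : Q1 → Q2 → QSt Q1 Q2
  | univ : QSt Q1 Q2
  | err : QSt Q1 Q2

/-- Action transitions of the quotient `T \\ S`. -/
def quotAct (T : TIOTS Act Q1) (S : TIOTS Act Q2) :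
    QSt Q1 Q2 → Act → QSt Q1 Q2 → Prop
  | QSt.st qT qS, a, QSt.st qT' qS' =>
      (a ∈ S.acts ∩ T.acts ∧ T.actTrans qT a qT' ∧ S.actTrans qS a qS') ∨
      (a ∈ S.acts \ T.acts ∧ S.actTrans qS a qS' ∧ qT' = qT) ∨
      (a ∈ T.acts \ S.acts ∧ T.actTrans qT a qT' ∧ qS' = qS)
  | QSt.st _ qS, a, QSt.univ => a ∈ S.outputs ∧ ¬ ∃ qS', S.actTrans qS a qS'
  | QSt.st qT qS, a, QSt.err =>
      a ∈ S.outputs ∩ T.outputs ∧ (¬ ∃ qT', T.actTrans qT a qT') ∧ ∃ qS', S.actTrans qS a qS'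
  | QSt.univ, a, QSt.univ =>
      a ∈ (T.inputs ∪ S.outputs) ∪ ((T.outputs \ S.outputs) ∪ (S.inputs \ T.inputs))
  | QSt.err, a, QSt.err => a ∈ T.inputs ∪ S.outputs
  | _, _, _ => False

/-- Delay transitions of the quotient `T \\ S`. -/
def quotDelay (T : TIOTS Act Q1) (S : TIOTS Act Q2) :
    QSt Q1 Q2 → ℝ≥0 → QSt Q1 Q2 → Prop
  | QSt.st qT qS, d, QSt.st qT' qS' => T.delayTrans qT d qT' ∧ S.delayTrans qS d qS'
  | QSt.st _ qS, d, QSt.univ => ¬ ∃ qS', S.delayTrans qS d qS'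
  | QSt.univ, _, QSt.univ => True
  | _, _, _ => False

/-- The quotient `T \\ S`. -/
def quot (T : TIOTS Act Q1) (S : TIOTS Act Q2) : TIOTS Act (QSt Q1 Q2) where
  init := QSt.st T.init S.init
  inputs := T.inputs ∪ S.outputs
  outputs := (T.outputs \ S.outputs) ∪ (S.inputs \ T.inputs)
  actTrans := T.quotAct S
  delayTrans := T.quotDelay S

end TIOTS

/-- Clock guards: Boolean formulas over atomic clock constraints `x ≺ n`. -/
inductive ClockGuard (C : Type) where
  | tt : ClockGuard C
  | ff : ClockGuard C
  | lt : C → ℕ → ClockGuard C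
  | le : C → ℕ → ClockGuard C
  | gt : C → ℕ → ClockGuard C
  | ge : C → ℕ → ClockGuard C
  | eq : C → ℕ → ClockGuard C
  | and : ClockGuard C → ClockGuard C → ClockGuard C
  | or : ClockGuard C → ClockGuard C → ClockGuard C
  | not : ClockGuard C → ClockGuard C

namespace ClockGuard

variable {C C' : Type}

/-- Satisfaction of a clock guard by a clock valuation. -/
def sat (v : C → ℝ≥0) : ClockGuard C → Prop
  | tt => True
  | ff => False
  | lt x n => v x < (n : ℝ≥0)
  | le x n => v x ≤ (n : ℝ≥0)
  | gt x n => (n : ℝ≥0) < v x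
  | ge x n => (n : ℝ≥0) ≤ v x
  | eq x n => v x = (n : ℝ≥0)
  | and g₁ g₂ => sat v g₁ ∧ sat v g₂
  | or g₁ g₂ => sat v g₁ ∨ sat v g₂
  | not g => ¬ sat v g

/-- Renaming of the clocks of a guard. -/
def map (f : C → C') : ClockGuard C → ClockGuard C'
  | tt => tt
  | ff => ff
  | lt x n => lt (f x) n
  | le x n => le (f x) n
  | gt x n => gt (f x) n
  | ge x n => ge (f x) n
  | eq x n => eq (f x) n
  | and g₁ g₂ => and (map f g₁) (map f g₂)
  | or g₁ g₂ => or (map f g₁) (map f g₂)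
  | not g => not (map f g)

end ClockGuard

/-- A Timed I/O Automaton over action type `Act`, location type `L`
and clock type `C`. -/
structure TIOA (Act L C : Type) where
  init : L
  inputs : Set Act
  outputs : Set Act
  edges : Set (L × Act × ClockGuard C × Set C × L)
  inv : L → ClockGuard C

namespace TIOA

variable {Act L C L1 L2 C1 C2 : Type}

/-- The alphabet (action set) of a TIOA. -/
def acts (A : TIOA Act L C) : Set Act := A.inputs ∪ A.outputs

open Classical in
/-- Reset the clocks in `c` to zero. -/
noncomputable def resetVal (v : C → ℝ≥0) (c : Set C) : C → ℝ≥0 :=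
  fun x => if x ∈ c then 0 else v x

/-- The semantics of a TIOA as a TIOTS. -/
noncomputable def sem (A : TIOA Act L C) : TIOTS Act (L × (C → ℝ≥0)) where
  init := (A.init, fun _ => 0)
  inputs := A.inputs
  outputs := A.outputs
  actTrans := fun q a q' =>
    ∃ g c, (q.1, a, g, c, q'.1) ∈ A.edges ∧ ClockGuard.sat q.2 g ∧
      q'.2 = resetVal q.2 c ∧ ClockGuard.sat q'.2 (A.inv q'.1)
  delayTrans := fun q d q' =>
    q'.1 = q.1 ∧ q'.2 = (fun x => q.2 x + d) ∧
    ClockGuard.sat q'.2 (A.inv q.1) ∧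
    ∀ d' : ℝ≥0, d' < d → ClockGuard.sat (fun x => q.2 x + d') (A.inv q.1)

/-- Conjunction of TIOAs (with disjoint clock sets, realized as a sum type). -/
def conjA (A : TIOA Act L1 C1) (B : TIOA Act L2 C2) :
    TIOA Act (L1 × L2) (C1 ⊕ C2) where
  init := (A.init, B.init)
  inputs := A.inputs ∪ B.inputs
  outputs := A.outputs ∪ B.outputs
  edges := { e |
    (∃ l1 l2 a g1 g2 c1 c2 l1' l2',
      e = ((l1, l2), a,
            ClockGuard.and (ClockGuard.map Sum.inl g1) (ClockGuard.map Sum.inr g2),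
            Sum.inl '' c1 ∪ Sum.inr '' c2, (l1', l2')) ∧
      a ∈ A.acts ∩ B.acts ∧ (l1, a, g1, c1, l1') ∈ A.edges ∧ (l2, a, g2, c2, l2') ∈ B.edges) ∨
    (∃ l1 l2 a g1 c1 l1',
      e = ((l1, l2), a, ClockGuard.map Sum.inl g1, Sum.inl '' c1, (l1', l2)) ∧
      a ∈ A.acts \ B.acts ∧ (l1, a, g1, c1, l1') ∈ A.edges) ∨
    (∃ l1 l2 a g2 c2 l2',
      e = ((l1, l2), a, ClockGuard.map Sum.inr g2, Sum.inr '' c2, (l1, l2')) ∧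
      a ∈ B.acts \ A.acts ∧ (l2, a, g2, c2, l2') ∈ B.edges) }
  inv := fun l =>
    ClockGuard.and (ClockGuard.map Sum.inl (A.inv l.1)) (ClockGuard.map Sum.inr (B.inv l.2))

/-- Parallel composition of TIOAs (with disjoint clock sets). -/
def parA (A : TIOA Act L1 C1) (B : TIOA Act L2 C2) :
    TIOA Act (L1 × L2) (C1 ⊕ C2) where
  init := (A.init, B.init)
  inputs := (A.inputs \ B.outputs) ∪ (B.inputs \ A.outputs)
  outputs := A.outputs ∪ B.outputs
  edges := { e |
    (∃ l1 l2 a g1 g2 c1 c2 l1' l2',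
      e = ((l1, l2), a,
            ClockGuard.and (ClockGuard.map Sum.inl g1) (ClockGuard.map Sum.inr g2),
            Sum.inl '' c1 ∪ Sum.inr '' c2, (l1', l2')) ∧
      a ∈ A.acts ∩ B.acts ∧ (l1, a, g1, c1, l1') ∈ A.edges ∧ (l2, a, g2, c2, l2') ∈ B.edges) ∨
    (∃ l1 l2 a g1 c1 l1',
      e = ((l1, l2), a, ClockGuard.map Sum.inl g1, Sum.inl '' c1, (l1', l2)) ∧
      a ∈ A.acts \ B.acts ∧ (l1, a, g1, c1, l1') ∈ A.edges) ∨
    (∃ l1 l2 a g2 c2 l2',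
      e = ((l1, l2), a, ClockGuard.map Sum.inr g2, Sum.inr '' c2, (l1, l2')) ∧
      a ∈ B.acts \ A.acts ∧ (l2, a, g2, c2, l2') ∈ B.edges) }
  inv := fun l =>
    ClockGuard.and (ClockGuard.map Sum.inl (A.inv l.1)) (ClockGuard.map Sum.inr (B.inv l.2))

/-- The canonical bijection between the states of `⟦A¹ ∧ A²⟧` (resp. `⟦A¹ ∥ A²⟧`)
and the states of `⟦A¹⟧ ∧ ⟦A²⟧` (resp. `⟦A¹⟧ ∥ ⟦A²⟧`):
`((l¹,l²), v) ↦ ((l¹, v∘inl), (l², v∘inr))`. -/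
def stateMap {L1 L2 C1 C2 : Type} (q : (L1 × L2) × ((C1 ⊕ C2) → ℝ≥0)) :
    (L1 × (C1 → ℝ≥0)) × (L2 × (C2 → ℝ≥0)) :=
  ((q.1.1, fun x => q.2 (Sum.inl x)), (q.1.2, fun x => q.2 (Sum.inr x)))

end TIOA


namespace LCAux

variable {Act Q : Type} (S : TIOTS Act Q)

/-- `q` can delay forever. -/
def AA (q : Q) : Prop := ∀ d : ℝ≥0, ∃ q', S.delayTrans q d q'

/-- `q` has an output enabled. -/
def hasOut (q : Q) : Prop := ∃ o ∈ S.outputs, ∃ q'', S.actTrans q o q''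

/-- Invariant of the states of the constructed implementation. -/
def Good (p : Q × ℝ≥0) : Prop :=
  (AA S p.1 ∧ p.2 = 0) ∨ (¬ AA S p.1 ∧ ∃ x, S.delayTrans p.1 p.2 x ∧ hasOut S x)

open Classical in
noncomputable def plan (hp : ∀ q, S.IndependentProgress q) (q : Q) : ℝ≥0 :=
  if h : AA S q then 0 else ((hp q).resolve_left h).choose

lemma plan_spec (hp : ∀ q, S.IndependentProgress q) (q : Q) (h : ¬ AA S q) :
    ∃ x, S.delayTrans q (plan S hp q) x ∧ hasOut S x := by
  unfold plan
  rw [dif_neg h]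
  obtain ⟨q', o, ho, hd, hq''⟩ := ((hp q).resolve_left h).choose_spec
  exact ⟨q', hd, o, ho, hq''⟩

lemma good_plan (hp : ∀ q, S.IndependentProgress q) (q : Q) :
    Good S (q, plan S hp q) := by
  by_cases h : AA S q
  · exact Or.inl ⟨h, by unfold plan; rw [dif_pos h]⟩
  · exact Or.inr ⟨h, plan_spec S hp q h⟩

lemma AA_fwd (hT : S.IsTIOTS) {q m : Q} {d : ℝ≥0}
    (hA : AA S q) (hd : S.delayTrans q d m) : AA S m := by
  intro e
  obtain ⟨x, hx⟩ := hA (d + e)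
  obtain ⟨m', hm', he⟩ := (hT.2.2.2.2.2 q x d e).mp hx
  have : m' = m := hT.2.2.2.1 q d m' m hm' hd
  exact ⟨x, this ▸ he⟩

lemma AA_bwd (hT : S.IsTIOTS) {q m : Q} {d : ℝ≥0}
    (hd : S.delayTrans q d m) (hA : AA S m) : AA S q := by
  intro e
  rcases le_total e d with h | h
  · obtain ⟨x, hx, _⟩ := (hT.2.2.2.2.2 q m e (d - e)).mp
      (by rwa [add_tsub_cancel_of_le h])
    exact ⟨x, hx⟩
  · obtain ⟨y, hy⟩ := hA (e - d)
    have := (hT.2.2.2.2.2 q y d (e - d)).mpr ⟨m, hd, hy⟩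
    rw [add_tsub_cancel_of_le h] at this
    exact ⟨y, this⟩

/-- The constructed implementation. -/
noncomputable def P (hp : ∀ q, S.IndependentProgress q) :
    TIOTS Act {p : Q × ℝ≥0 // Good S p} where
  init := ⟨(S.init, plan S hp S.init), good_plan S hp _⟩
  inputs := S.inputs
  outputs := S.outputs
  actTrans := fun p a p' =>
    (a ∈ S.inputs ∧ S.actTrans p.1.1 a p'.1.1 ∧ p'.1.2 = plan S hp p'.1.1) ∨
    (a ∈ S.outputs ∧ ¬ AA S p.1.1 ∧ p.1.2 = 0 ∧ S.actTrans p.1.1 a p'.1.1 ∧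
      p'.1.2 = plan S hp p'.1.1)
  delayTrans := fun p d p' =>
    (AA S p.1.1 ∧ S.delayTrans p.1.1 d p'.1.1 ∧ p'.1.2 = 0) ∨
    (¬ AA S p.1.1 ∧ d ≤ p.1.2 ∧ S.delayTrans p.1.1 d p'.1.1 ∧ p'.1.2 = p.1.2 - d)

end LCAux

/-- Every locally consistent specification is consistent. -/
theorem locallyConsistent_implies_consistent {Act Q : Type} (S : TIOTS Act Q)
    (hS : S.LocallyConsistent) :
    ∃ (QP : Type) (P : TIOTS Act QP), P.IsImplementation ∧
      P.inputs = S.inputs ∧ P.outputs = S.outputs ∧ P.Refines S := by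
  obtain ⟨⟨hT, hIE⟩, hp⟩ := hS
  obtain ⟨hdisj, hlab, hadet, hddet, hrefl, hadd⟩ := hT
  have hT' : S.IsTIOTS := ⟨hdisj, hlab, hadet, hddet, hrefl, hadd⟩
  refine ⟨{p : Q × ℝ≥0 // LCAux.Good S p}, LCAux.P S hp, ⟨⟨?_, ?_⟩, ?_⟩, rfl, rfl, ?_⟩
  · -- IsTIOTS of P
    refine ⟨hdisj, ?_, ?_, ?_, ?_, ?_⟩
    · rintro p a p' (⟨ha, _⟩ | ⟨ha, _⟩)
      · exact Or.inl ha
      · exact Or.inr ha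
    · rintro p a p' p'' (⟨ha, h1, h2⟩ | ⟨ha, _, _, h1, h2⟩)
        (⟨ha', h1', h2'⟩ | ⟨ha', _, _, h1', h2'⟩)
      · have hq := hadet p.1.1 a p'.1.1 p''.1.1 h1 h1'
        exact Subtype.ext (Prod.ext hq (by rw [h2, h2', hq]))
      · exact absurd ha' (Set.disjoint_left.mp hdisj ha)
      · exact absurd ha (Set.disjoint_left.mp hdisj ha')
      · have hq := hadet p.1.1 a p'.1.1 p''.1.1 h1 h1'
        exact Subtype.ext (Prod.ext hq (by rw [h2, h2', hq]))
    · rintro p d p' p'' (⟨hA, h1, h2⟩ | ⟨hA, _, h1, h2⟩)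
        (⟨hA', h1', h2'⟩ | ⟨hA', _, h1', h2'⟩)
      · exact Subtype.ext (Prod.ext (hddet p.1.1 d _ _ h1 h1') (h2.trans h2'.symm))
      · exact absurd hA hA'
      · exact absurd hA' hA
      · exact Subtype.ext (Prod.ext (hddet p.1.1 d _ _ h1 h1') (h2.trans h2'.symm))
    · intro p
      by_cases hA : LCAux.AA S p.1.1
      · have hr0 : p.1.2 = 0 := by
          rcases p.2 with ⟨_, h⟩ | ⟨h, _⟩
          · exact h
          · exact absurd hA h
        exact Or.inl ⟨hA, hrefl _, hr0⟩
      · exact Or.inr ⟨hA, zero_le, hrefl _, (tsub_zero _).symm⟩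
    · intro p p'' d1 d2
      constructor
      · rintro (⟨hA, h1, h2⟩ | ⟨hA, hle, h1, h2⟩)
        · obtain ⟨m, hm1, hm2⟩ := (hadd p.1.1 p''.1.1 d1 d2).mp h1
          exact ⟨⟨(m, 0), Or.inl ⟨LCAux.AA_fwd S hT' hA hm1, rfl⟩⟩,
            Or.inl ⟨hA, hm1, rfl⟩,
            Or.inl ⟨LCAux.AA_fwd S hT' hA hm1, hm2, h2⟩⟩
        · obtain ⟨m, hm1, hm2⟩ := (hadd p.1.1 p''.1.1 d1 d2).mp h1
          have hd1 : d1 ≤ p.1.2 := le_trans le_self_add hle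
          have hAm : ¬ LCAux.AA S m := fun h => hA (LCAux.AA_bwd S hT' hm1 h)
          have hgood : LCAux.Good S (m, p.1.2 - d1) := by
            rcases p.2 with ⟨hA', _⟩ | ⟨_, x, hx, hOx⟩
            · exact absurd hA' hA
            · refine Or.inr ⟨hAm, x, ?_, hOx⟩
              have heq : p.1.2 = d1 + (p.1.2 - d1) := (add_tsub_cancel_of_le hd1).symm
              rw [heq] at hx
              obtain ⟨m', hm1', hm2'⟩ := (hadd p.1.1 x d1 _).mp hx
              have : m' = m := hddet _ _ _ _ hm1' hm1
              exact this ▸ hm2'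
          have hd2 : d2 ≤ p.1.2 - d1 := le_tsub_of_add_le_left hle
          exact ⟨⟨(m, p.1.2 - d1), hgood⟩, Or.inr ⟨hA, hd1, hm1, rfl⟩,
            Or.inr ⟨hAm, hd2, hm2, by rw [h2, tsub_tsub]⟩⟩
      · rintro ⟨m, (⟨hA, h1, h2⟩ | ⟨hA, hle1, h1, h2⟩),
          (⟨hAm, h1', h2'⟩ | ⟨hAm, hle2, h1', h2'⟩)⟩
        · exact Or.inl ⟨hA, (hadd p.1.1 p''.1.1 d1 d2).mpr ⟨m.1.1, h1, h1'⟩, h2'⟩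
        · exact absurd (LCAux.AA_fwd S hT' hA h1) hAm
        · exact absurd (LCAux.AA_bwd S hT' h1 hAm) hA
        · rw [h2] at hle2 h2'
          refine Or.inr ⟨hA, (le_tsub_iff_left hle1).mp hle2,
            (hadd p.1.1 p''.1.1 d1 d2).mpr ⟨m.1.1, h1, h1'⟩, ?_⟩
          rw [h2', tsub_tsub]
  · -- input enabled
    intro p a ha
    obtain ⟨q', hq'⟩ := hIE p.1.1 a ha
    exact ⟨⟨(q', LCAux.plan S hp q'), LCAux.good_plan S hp q'⟩, Or.inl ⟨ha, hq', rfl⟩⟩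
  · -- urgency and progress
    intro p
    constructor
    · rintro o ho p' d p'' (⟨ha, _, _⟩ | ⟨_, hA, hr0, _, _⟩) hdel
      · exact absurd ho (Set.disjoint_left.mp hdisj ha)
      · rcases hdel with ⟨hA', _, _⟩ | ⟨_, hle, _, _⟩
        · exact absurd hA' hA
        · rw [hr0] at hle
          exact le_antisymm hle (zero_le)
    · have hg : (LCAux.AA S p.1.1 ∧ p.1.2 = 0) ∨
          (¬ LCAux.AA S p.1.1 ∧ ∃ x, S.delayTrans p.1.1 p.1.2 x ∧ LCAux.hasOut S x) := p.2
      rcases hg with ⟨hA, hr0⟩ | ⟨hA, x, hx, o, ho, q'', hq''⟩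
      · left
        intro d
        obtain ⟨q', hq'⟩ := hA d
        exact ⟨⟨(q', 0), Or.inl ⟨LCAux.AA_fwd S hT' hA hq', rfl⟩⟩, Or.inl ⟨hA, hq', rfl⟩⟩
      · right
        have hAx : ¬ LCAux.AA S x := fun h => hA (LCAux.AA_bwd S hT' hx h)
        refine ⟨p.1.2, ⟨(x, 0), Or.inr ⟨hAx, x, hrefl x, o, ho, q'', hq''⟩⟩, o, ho,
          Or.inr ⟨hA, le_refl _, hx, (tsub_self _).symm⟩,
          ⟨(q'', LCAux.plan S hp q''), LCAux.good_plan S hp q''⟩,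
          Or.inr ⟨ho, hAx, rfl, hq'', rfl⟩⟩
  · -- refinement
    refine ⟨hdisj, hdisj.symm, subset_rfl, subset_rfl,
      fun s t => s.1.1 = t, rfl, ?_⟩
    intro s t hst
    refine ⟨?_, ?_, ?_, ?_, ?_⟩
    · rintro a ⟨ha, -⟩ t' ht'
      exact ⟨⟨(t', LCAux.plan S hp t'), LCAux.good_plan S hp t'⟩,
        Or.inl ⟨ha, by rw [hst]; exact ht', rfl⟩, rfl⟩
    · rintro a ⟨h1, h2⟩ t' _
      exact absurd h1 h2
    · rintro a ⟨ha, -⟩ s' (⟨hain, _, _⟩ | ⟨_, _, _, hact, _⟩)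
      · exact absurd ha (Set.disjoint_left.mp hdisj hain)
      · exact ⟨s'.1.1, by rw [← hst]; exact hact, rfl⟩
    · rintro a ⟨h1, h2⟩ s' _
      exact absurd h1 h2
    · rintro d s' (⟨_, hdel, _⟩ | ⟨_, _, hdel, _⟩) <;>
        exact ⟨s'.1.1, by rw [← hst]; exact hdel, rfl⟩
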